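/- Let μ be a Borel probability measure on ℝ^d absolutely continuous with respect to Lebesgue measure, let X_1,…,X_n be i.i.d. with law μ, let h_1,…,h_n be n distinct points of [0,1]^d, and let σ̂ be a measurable random permutation of {1,…,n} that is almost surely an optimal assignment of (X_1,…,X_n) to (h_1,…,h_n). Then σ̂ is uniformly distributed over the n! permutations of {1,…,n}; equivalently, the vector of empirical ranks (h_{σ̂(1)},…,h_{σ̂(n)}) is uniformly distributed over the n! orderings of {h_1,…,h_n}, and in particular its law does not depend on μ. -/

import Mathlib

open MeasureTheory ProbabilityTheory Filter Topology
open scoped ENNReal NNReal RealInnerProductSpace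

noncomputable section

/-- `Euc d` is the Euclidean space `ℝ^d` with its Euclidean norm. -/
abbrev Euc (d : ℕ) : Type := EuclideanSpace ℝ (Fin d)

/-- The unit cube `[0,1]^d`. -/
def unitCube (d : ℕ) : Set (Euc d) := {x | ∀ i, x i ∈ Set.Icc (0 : ℝ) 1}

/-- A permutation `σ` is an optimal assignment of the points `x` to the points `h` if it
minimizes `σ ↦ ∑ i ‖x i − h (σ i)‖²` over all permutations. -/
def IsOptAssign {d n : ℕ} (x h : Fin n → Euc d) (σ : Equiv.Perm (Fin n)) : Prop :=
  ∀ τ : Equiv.Perm (Fin n), ∑ i, ‖x i - h (σ i)‖ ^ 2 ≤ ∑ i, ‖x i - h (τ i)‖ ^ 2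

/-- The transport cost of assignment `σ`. -/
private def cost {d n : ℕ} (h y : Fin n → Euc d) (σ : Equiv.Perm (Fin n)) : ℝ :=
  ∑ i, ‖y i - h (σ i)‖ ^ 2

private lemma isOptAssign_iff_cost {d n : ℕ} (y h : Fin n → Euc d) (σ : Equiv.Perm (Fin n)) :
    IsOptAssign y h σ ↔ ∀ τ, cost h y σ ≤ cost h y τ := Iff.rfl

private lemma cost_comp {d n : ℕ} (h y : Fin n → Euc d) (σ τ : Equiv.Perm (Fin n)) :
    cost h (fun i => y (τ i)) σ = cost h y (σ * τ⁻¹) := by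
  rw [cost, cost, ← Equiv.sum_comp τ (fun j => ‖y j - h ((σ * τ⁻¹) j)‖ ^ 2)]
  refine Finset.sum_congr rfl fun i _ => ?_
  simp [Equiv.Perm.mul_apply]

private lemma opt_comp {d n : ℕ} (h y : Fin n → Euc d) (σ τ : Equiv.Perm (Fin n)) :
    IsOptAssign (fun i => y (τ i)) h σ ↔ IsOptAssign y h (σ * τ⁻¹) := by
  rw [isOptAssign_iff_cost, isOptAssign_iff_cost]
  constructor
  · intro H τ'
    have := H (τ' * τ)
    rwa [cost_comp, cost_comp, mul_inv_cancel_right] at this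
  · intro H τ'
    rw [cost_comp, cost_comp]
    exact H _

private lemma cost_measurable {d n : ℕ} (h : Fin n → Euc d) (σ : Equiv.Perm (Fin n)) :
    Measurable fun y : Fin n → Euc d => cost h y σ := by
  refine Continuous.measurable ?_
  refine continuous_finset_sum _ fun i _ => ?_
  exact (((continuous_apply i).sub continuous_const).norm).pow 2

/-- absolute continuity for finite products of measures -/
private lemma pi_ac {E : Type*} [MeasurableSpace E] :
    ∀ (n : ℕ) (μ ν : Fin n → Measure E), (∀ i, SigmaFinite (μ i)) → (∀ i, SigmaFinite (ν i)) →
      (∀ i, μ i ≪ ν i) → Measure.pi μ ≪ Measure.pi ν := by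
  intro n
  induction n with
  | zero =>
    intro μ ν _ _ _
    rw [Measure.pi_of_empty, Measure.pi_of_empty]
  | succ n ih =>
    intro μ ν hμ hν hac
    haveI := hμ; haveI := hν
    haveI : ∀ i : Fin n, SigmaFinite (μ ((0 : Fin (n+1)).succAbove i)) := fun i => hμ _
    haveI : ∀ i : Fin n, SigmaFinite (ν ((0 : Fin (n+1)).succAbove i)) := fun i => hν _
    have h1 := (measurePreserving_piFinSuccAbove μ 0).symm
      (MeasurableEquiv.piFinSuccAbove (fun _ : Fin (n + 1) => E) 0)
    have h2 := (measurePreserving_piFinSuccAbove ν 0).symm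
      (MeasurableEquiv.piFinSuccAbove (fun _ : Fin (n + 1) => E) 0)
    rw [← h1.map_eq, ← h2.map_eq]
    have hprod : (μ 0).prod (Measure.pi fun i => μ ((0 : Fin (n+1)).succAbove i)) ≪
        (ν 0).prod (Measure.pi fun i => ν ((0 : Fin (n+1)).succAbove i)) :=
      Measure.AbsolutelyContinuous.prod (hac 0) (ih _ _ (fun i => hμ _) (fun i => hν _)
        (fun i => hac _))
    exact hprod.map
      (MeasurableEquiv.piFinSuccAbove (fun _ : Fin (n + 1) => E) 0).symm.measurable

theorem stmt1
    {d n : ℕ} {Ω : Type*} [MeasurableSpace Ω] (P : Measure Ω) [IsProbabilityMeasure P]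
    (μ : Measure (Euc d)) [IsProbabilityMeasure μ] (hac : μ ≪ volume)
    (X : Fin n → Ω → Euc d) (hXmeas : ∀ i, Measurable (X i))
    (hindep : iIndepFun X P)
    (hlaw : ∀ i, Measure.map (X i) P = μ)
    (h : Fin n → Euc d) (hcube : ∀ i, h i ∈ unitCube d) (hinj : Function.Injective h)
    (σhat : Ω → Equiv.Perm (Fin n))
    (hσmeas : ∀ σ₀ : Equiv.Perm (Fin n), MeasurableSet {ω | σhat ω = σ₀})
    (hopt : ∀ᵐ ω ∂P, IsOptAssign (fun i => X i ω) h (σhat ω)) :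
    ∀ σ₀ : Equiv.Perm (Fin n), P {ω | σhat ω = σ₀} = (Nat.factorial n : ℝ≥0∞)⁻¹ := by
  classical
  intro σ₀
  set Y : Ω → (Fin n → Euc d) := fun ω i => X i ω with hYdef
  have hYmeas : Measurable Y := measurable_pi_lambda _ fun i => hXmeas i
  set ν : Measure (Fin n → Euc d) := Measure.pi (fun _ : Fin n => μ) with hνdef
  -- joint law is the product measure
  have hν : Measure.map Y P = ν := by
    rw [hνdef]
    refine (Measure.pi_eq fun s hs => ?_).symm
    rw [Measure.map_apply hYmeas (MeasurableSet.univ_pi hs)]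
    have hpre : Y ⁻¹' Set.pi Set.univ s = ⋂ i ∈ Finset.univ, X i ⁻¹' s i := by
      ext ω
      simp [Set.mem_pi, hYdef]
    rw [hpre, hindep.measure_inter_preimage_eq_mul Finset.univ (fun i _ => hs i)]
    exact Finset.prod_congr rfl fun i _ => by
      rw [← hlaw i, Measure.map_apply (hXmeas i) (hs i)]
  -- the "bad" set where two assignments have equal cost
  set Bad : Set (Fin n → Euc d) := ⋃ (p : Equiv.Perm (Fin n) × Equiv.Perm (Fin n)) (_ : p.1 ≠ p.2),
      {y : Fin n → Euc d | cost h y p.1 = cost h y p.2} with hBadDef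
  have hBadMeas : MeasurableSet Bad := by
    refine MeasurableSet.iUnion fun p => MeasurableSet.iUnion fun _ => ?_
    exact measurableSet_eq_fun (cost_measurable h p.1) (cost_measurable h p.2)
  -- the bad set is ν-null
  have hBadNull : ν Bad = 0 := by
    have hνvol : ν ≪ (volume : Measure (Fin n → Euc d)) := by
      rw [show (volume : Measure (Fin n → Euc d)) = Measure.pi fun _ => volume from rfl]
      exact pi_ac n _ _ (fun _ => inferInstance) (fun _ => inferInstance) (fun _ => hac)
    refine hνvol ?_
    refine measure_iUnion_null fun p => measure_iUnion_null fun hp => ?_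
    -- the set is contained in the kernel of a nonzero linear form
    set a : Fin n → Euc d := fun i => h (p.1 i) - h (p.2 i) with hadef
    set L : (Fin n → Euc d) →ₗ[ℝ] ℝ :=
      ∑ i, (innerSL ℝ (a i)).toLinearMap.comp (LinearMap.proj i) with hLdef
    have hLapp : ∀ y : Fin n → Euc d, L y = ∑ i, ⟪a i, y i⟫ := by
      intro y
      simp [hLdef, LinearMap.sum_apply, PiLp.inner_apply, RCLike.inner_apply,
        LinearMap.proj_apply]
    have hsub : {y : Fin n → Euc d | cost h y p.1 = cost h y p.2} ⊆ (LinearMap.ker L : Set (Fin n → Euc d)) := by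
      intro y hy
      have hy' : cost h y p.1 - cost h y p.2 = 0 := sub_eq_zero_of_eq hy
      have hexp : cost h y p.1 - cost h y p.2 = (-2 : ℝ) * ∑ i, ⟪a i, y i⟫ := by
        rw [cost, cost, ← Finset.sum_sub_distrib]
        have : ∀ i, ‖y i - h (p.1 i)‖ ^ 2 - ‖y i - h (p.2 i)‖ ^ 2
            = (-2 : ℝ) * ⟪a i, y i⟫ + (‖h (p.1 i)‖ ^ 2 - ‖h (p.2 i)‖ ^ 2) := by
          intro i
          rw [norm_sub_sq_real, norm_sub_sq_real, hadef]
          simp only [inner_sub_left]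
          rw [real_inner_comm (h (p.1 i)) (y i), real_inner_comm (h (p.2 i)) (y i)]
          ring
        rw [Finset.sum_congr rfl fun i _ => this i, Finset.sum_add_distrib,
          Finset.sum_sub_distrib]
        have hσs : ∑ i, ‖h (p.1 i)‖ ^ 2 = ∑ i, ‖h (p.2 i)‖ ^ 2 := by
          rw [Equiv.sum_comp p.1 (fun j => ‖h j‖ ^ 2), Equiv.sum_comp p.2 (fun j => ‖h j‖ ^ 2)]
        rw [hσs, sub_self, add_zero, ← Finset.mul_sum]
      have : (-2 : ℝ) * ∑ i, ⟪a i, y i⟫ = 0 := by rw [← hexp]; exact hy'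
      have hz : ∑ i, ⟪a i, y i⟫ = 0 := by
        have h2 : (-2 : ℝ) ≠ 0 := by norm_num
        exact (mul_eq_zero.1 this).resolve_left h2
      simpa [LinearMap.mem_ker, hLapp] using hz
    refine measure_mono_null hsub ?_
    haveI : Measure.IsAddHaarMeasure (volume : Measure (Fin n → Euc d)) := Measure.pi.isAddHaarMeasure _
    refine Measure.addHaar_submodule _ _ ?_
    -- the linear form is nonzero
    intro htop
    obtain ⟨i₀, hi₀⟩ : ∃ i, p.1 i ≠ p.2 i := by
      by_contra hcon
      push_neg at hcon
      exact hp (Equiv.ext hcon)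
    have hai₀ : a i₀ ≠ 0 := by
      rw [hadef]
      simpa [sub_eq_zero] using fun hcontra => hi₀ (hinj hcontra)
    have hy0 : (Pi.single i₀ (a i₀) : Fin n → Euc d) ∈ LinearMap.ker L := by
      rw [htop]; trivial
    rw [LinearMap.mem_ker, hLapp] at hy0
    have : ∑ i, ⟪a i, (Pi.single i₀ (a i₀) : Fin n → Euc d) i⟫ = ⟪a i₀, a i₀⟫ := by
      rw [Finset.sum_eq_single i₀]
      · simp
      · intro j _ hj; simp [Pi.single_eq_of_ne hj]
      · simp
    rw [this] at hy0
    exact hai₀ (inner_self_eq_zero.1 hy0)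
  -- the sets where a given permutation is the unique optimum
  set B : Equiv.Perm (Fin n) → Set (Fin n → Euc d) := fun σ' => {y : Fin n → Euc d | IsOptAssign y h σ'} ∩ Badᶜ with hBdef
  have hOptMeas : ∀ σ' : Equiv.Perm (Fin n), MeasurableSet {y : Fin n → Euc d | IsOptAssign y h σ'} := by
    intro σ'
    have : {y : Fin n → Euc d | IsOptAssign y h σ'} = ⋂ τ, {y : Fin n → Euc d | cost h y σ' ≤ cost h y τ} := by
      ext y; simp [isOptAssign_iff_cost, Set.mem_iInter]
    rw [this]
    exact MeasurableSet.iInter fun τ =>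
      measurableSet_le (cost_measurable h σ') (cost_measurable h τ)
  have hBMeas : ∀ σ', MeasurableSet (B σ') := fun σ' => (hOptMeas σ').inter hBadMeas.compl
  -- uniqueness of the optimum outside Bad
  have huniq : ∀ y : Fin n → Euc d, y ∉ Bad → ∀ σ' τ', IsOptAssign y h σ' → IsOptAssign y h τ' → σ' = τ' := by
    intro y hy σ' τ' h1 h2
    by_contra hne
    refine hy ?_
    refine Set.mem_iUnion.2 ⟨(σ', τ'), Set.mem_iUnion.2 ⟨hne, ?_⟩⟩
    exact le_antisymm (h1 τ') (h2 σ')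
  -- invariance of ν under coordinate permutations
  have hT : ∀ τ : Equiv.Perm (Fin n),
      Measure.map (fun (y : Fin n → Euc d) i => y (τ i)) ν = ν := by
    intro τ
    have hTmeas : Measurable fun (y : Fin n → Euc d) i => y (τ i) :=
      measurable_pi_lambda _ fun i => measurable_pi_apply _
    rw [hνdef]
    refine (Measure.pi_eq fun s hs => ?_).symm
    rw [Measure.map_apply hTmeas (MeasurableSet.univ_pi hs)]
    have hpre : (fun (y : Fin n → Euc d) i => y (τ i)) ⁻¹' Set.pi Set.univ s
        = Set.pi Set.univ fun j => s (τ.symm j) := by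
      ext y
      constructor
      · intro hy j _
        have := hy (τ.symm j) trivial
        simpa using this
      · intro hy i _
        have := hy (τ i) trivial
        simpa using this
    rw [hpre, Measure.pi_pi]
    exact Equiv.prod_comp τ.symm fun i => μ (s i)
  -- preimage of B under a coordinate permutation
  have hBadInv : ∀ (τ : Equiv.Perm (Fin n)) (y : Fin n → Euc d), (fun i => y (τ i)) ∈ Bad ↔ y ∈ Bad := by
    intro τ y
    constructor
    · intro hy
      obtain ⟨p, hy'⟩ := Set.mem_iUnion.1 hy
      obtain ⟨hp, hcost⟩ := Set.mem_iUnion.1 hy'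
      refine Set.mem_iUnion.2 ⟨(p.1 * τ⁻¹, p.2 * τ⁻¹), Set.mem_iUnion.2 ⟨?_, ?_⟩⟩
      · simpa [mul_left_inj] using hp
      · show cost h y (p.1 * τ⁻¹) = cost h y (p.2 * τ⁻¹)
        rw [← cost_comp h y p.1 τ, ← cost_comp h y p.2 τ]
        exact hcost
    · intro hy
      obtain ⟨p, hy'⟩ := Set.mem_iUnion.1 hy
      obtain ⟨hp, hcost⟩ := Set.mem_iUnion.1 hy'
      refine Set.mem_iUnion.2 ⟨(p.1 * τ, p.2 * τ), Set.mem_iUnion.2 ⟨?_, ?_⟩⟩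
      · simpa [mul_left_inj] using hp
      · show cost h (fun i => y (τ i)) (p.1 * τ) = cost h (fun i => y (τ i)) (p.2 * τ)
        rw [cost_comp, cost_comp, mul_inv_cancel_right, mul_inv_cancel_right]
        exact hcost
  have hBpre : ∀ (τ : Equiv.Perm (Fin n)) (σ' : Equiv.Perm (Fin n)),
      (fun (y : Fin n → Euc d) i => y (τ i)) ⁻¹' B σ' = B (σ' * τ⁻¹) := by
    intro τ σ'
    ext y
    simp only [hBdef, Set.mem_preimage, Set.mem_inter_iff, Set.mem_setOf_eq, Set.mem_compl_iff]
    rw [opt_comp, hBadInv]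
  -- all the B σ' have the same measure
  have hBconst : ∀ σ₁ : Equiv.Perm (Fin n), ν (B σ₁) = ν (B σ₀) := by
    intro σ₁
    set τ : Equiv.Perm (Fin n) := σ₁⁻¹ * σ₀ with hτ
    have hTmeas : Measurable fun (y : Fin n → Euc d) i => y (τ i) :=
      measurable_pi_lambda _ fun i => measurable_pi_apply _
    have := hT τ
    calc ν (B σ₁) = ν (B (σ₀ * τ⁻¹)) := by
          rw [hτ]; congr 1; group
      _ = ν ((fun (y : Fin n → Euc d) i => y (τ i)) ⁻¹' B σ₀) := by rw [hBpre]
      _ = (Measure.map (fun (y : Fin n → Euc d) i => y (τ i)) ν) (B σ₀) := by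
          rw [Measure.map_apply hTmeas (hBMeas σ₀)]
      _ = ν (B σ₀) := by rw [hT τ]
  -- the B σ' partition Badᶜ
  haveI : IsProbabilityMeasure ν := by
    rw [hνdef]; infer_instance
  have hcover : (⋃ σ' : Equiv.Perm (Fin n), B σ') = Badᶜ := by
    ext y
    simp only [Set.mem_iUnion, hBdef, Set.mem_inter_iff, Set.mem_setOf_eq, Set.mem_compl_iff]
    constructor
    · rintro ⟨σ', _, hy⟩; exact hy
    · intro hy
      obtain ⟨σ', -, hσ'⟩ := Finset.exists_min_image Finset.univ
        (fun σ' : Equiv.Perm (Fin n) => cost h y σ') ⟨1, Finset.mem_univ 1⟩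
      exact ⟨σ', fun τ => hσ' τ (Finset.mem_univ τ), hy⟩
  have hdisj : Pairwise (Function.onFun Disjoint B) := by
    intro σ₁ σ₂ hne
    refine Set.disjoint_left.2 fun y hy1 hy2 => ?_
    exact hne (huniq y hy1.2 σ₁ σ₂ hy1.1 hy2.1)
  have hsum : ∑ σ' : Equiv.Perm (Fin n), ν (B σ') = 1 := by
    rw [← tsum_fintype (L := SummationFilter.unconditional _), ← measure_iUnion hdisj hBMeas, hcover,
      measure_compl hBadMeas (by simp), hBadNull]
    simp
  have hcard : (Fintype.card (Equiv.Perm (Fin n)) : ℝ≥0∞) * ν (B σ₀) = 1 := by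
    rw [← hsum, Finset.sum_congr rfl fun σ₁ _ => hBconst σ₁, Finset.sum_const,
      Finset.card_univ, nsmul_eq_mul]
  have hBval : ν (B σ₀) = (Nat.factorial n : ℝ≥0∞)⁻¹ := by
    rw [Fintype.card_perm, Fintype.card_fin] at hcard
    rw [mul_comm] at hcard
    exact ENNReal.eq_inv_of_mul_eq_one_left hcard
  -- transfer back to Ω
  have hYpre : ∀ S : Set (Fin n → Euc d), MeasurableSet S → P (Y ⁻¹' S) = ν S := by
    intro S hS
    rw [← hν, Measure.map_apply hYmeas hS]
  set G : Set Ω := {ω | IsOptAssign (Y ω) h (σhat ω)} ∩ Y ⁻¹' Badᶜ with hGdef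
  have hGcompl : P Gᶜ = 0 := by
    rw [hGdef, Set.compl_inter]
    refine measure_union_null ?_ ?_
    · have : {ω | IsOptAssign (Y ω) h (σhat ω)}ᶜ = {ω | ¬ IsOptAssign (fun i => X i ω) h (σhat ω)} := by
        ext ω; simp [hYdef]
      rw [this]
      exact ae_iff.1 hopt
    · rw [← Set.preimage_compl, compl_compl, hYpre Bad hBadMeas, hBadNull]
  have hkey : {ω | σhat ω = σ₀} ∩ G = (Y ⁻¹' B σ₀) ∩ G := by
    ext ω
    simp only [Set.mem_inter_iff, Set.mem_setOf_eq, Set.mem_preimage, hGdef, hBdef,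
      Set.mem_compl_iff]
    constructor
    · rintro ⟨hσ, hoptω, hbad⟩
      exact ⟨⟨hσ ▸ hoptω, hbad⟩, hoptω, hbad⟩
    · rintro ⟨⟨hopt₀, hbad⟩, hoptω, hbad'⟩
      exact ⟨huniq (Y ω) hbad' (σhat ω) σ₀ hoptω hopt₀, hoptω, hbad'⟩
  calc P {ω | σhat ω = σ₀} = P ({ω | σhat ω = σ₀} ∩ G) := (measure_inter_conull hGcompl).symm
    _ = P ((Y ⁻¹' B σ₀) ∩ G) := by rw [hkey]
    _ = P (Y ⁻¹' B σ₀) := measure_inter_conull hGcompl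
    _ = ν (B σ₀) := hYpre _ (hBMeas σ₀)
    _ = (Nat.factorial n : ℝ≥0∞)⁻¹ := hBval

end
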